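/- Let E be a finite-dimensional real inner product space, F : E → ℝ differentiable with F ≥ 0, and λ ≥ 0. Suppose that for every w₀ ∈ E there exists a gradient-flow trajectory w : [0,∞) → E of F with w(0) = w₀ such that F(w(t)) ≤ F(w₀)·exp(−λ t) for all t ≥ 0. Then F satisfies the Polyak–Łojasiewicz inequality: λ·F(u) ≤ ‖∇F(u)‖² for every u ∈ E. -/

import Mathlib

open RealInnerProductSpace

/-- An exponential rate of convergence for gradient flow from every initial point
implies the Polyak–Łojasiewicz inequality. -/
theorem gradient_flow_rate_implies_pl
    {E : Type*} [NormedAddCommGroup E] [InnerProductSpace ℝ E] [FiniteDimensional ℝ E]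
    (F : E → ℝ) (hF : Differentiable ℝ F) (hFnonneg : ∀ u, 0 ≤ F u)
    (lam : ℝ) (hlam : 0 ≤ lam)
    (hrate : ∀ w₀ : E, ∃ w : ℝ → E, w 0 = w₀ ∧
      (∀ t : ℝ, 0 ≤ t → HasDerivAt w (-gradient F (w t)) t) ∧
      (∀ t : ℝ, 0 ≤ t → F (w t) ≤ F w₀ * Real.exp (-(lam * t)))) :
    ∀ u : E, lam * F u ≤ ‖gradient F u‖ ^ 2 := by
  intro u
  obtain ⟨w, hw0, hw', hwle⟩ := hrate u
  set g := gradient F u with hg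
  -- derivative of F ∘ w at 0
  have hFw : HasDerivAt (fun t => F (w t)) (-‖g‖ ^ 2) 0 := by
    have h1 : HasDerivAt w (-g) 0 := by simpa [hw0] using hw' 0 le_rfl
    have h2 : HasFDerivAt F (InnerProductSpace.toDual ℝ E g) u :=
      (hF u).hasGradientAt.hasFDerivAt
    have := (hw0 ▸ h2).comp_hasDerivAt 0 h1
    simpa [InnerProductSpace.toDual_apply_apply, real_inner_smul_right, inner_neg_right,
      real_inner_self_eq_norm_sq, sq, Function.comp_def] using this
  -- derivative of the bound at 0
  have hb : HasDerivAt (fun t : ℝ => F u * Real.exp (-(lam * t))) (-(lam * F u)) 0 := by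
    have h3 : HasDerivAt (fun t : ℝ => -(lam * t)) (-lam) 0 := by
      simpa [Pi.neg_def] using ((hasDerivAt_id (0:ℝ)).const_mul lam).neg
    have := (h3.exp).const_mul (F u)
    simpa [mul_comm, mul_assoc, mul_left_comm] using this
  -- φ = bound - F∘w, nonneg on Ici 0, zero at 0
  set φ : ℝ → ℝ := fun t => F u * Real.exp (-(lam * t)) - F (w t) with hφ
  have hφ0 : φ 0 = 0 := by simp [hφ, hw0]
  have hφd : HasDerivAt φ (-(lam * F u) + ‖g‖ ^ 2) 0 := by
    simpa [hφ, sub_eq_add_neg, Pi.add_def, Pi.neg_def] using hb.sub hFw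
  have hφnonneg : ∀ t : ℝ, 0 ≤ t → 0 ≤ φ t := fun t ht =>
    sub_nonneg.mpr (hwle t ht)
  -- derivative within Ioi 0 is nonneg by slope argument
  have hslope : Filter.Tendsto (slope φ 0) (nhdsWithin 0 (Set.Ioi 0))
      (nhds (-(lam * F u) + ‖g‖ ^ 2)) :=
    (hasDerivAt_iff_tendsto_slope.mp hφd).mono_left
      (nhdsWithin_mono 0 (fun x hx => Set.mem_compl_singleton_iff.mpr (ne_of_gt hx)))
  have hge : 0 ≤ -(lam * F u) + ‖g‖ ^ 2 := by
    refine ge_of_tendsto hslope ?_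
    filter_upwards [self_mem_nhdsWithin] with t ht
    have ht' : (0:ℝ) < t := ht
    have := hφnonneg t ht'.le
    rw [slope_def_field]
    simp only [hφ0, sub_zero]
    positivity
  linarith
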